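/- In the group algebra ℂ[S_k], the product L_2 L_3 ⋯ L_k of the Jucys–Murphy elements equals the sum of all k-cycles in S_k (i.e. the sum of all permutations in S_k consisting of a single cycle of length k). -/

import Mathlib

open MonoidAlgebra

/-- The `j`-th Jucys–Murphy element of `ℂ[S_k]` (0-indexed: `JM k j` corresponds to the
classical `L_{j+1} = Σ_{m < j+1} (m, j+1)`, so `JM k 0 = L₁ = 0`). -/
noncomputable def JM (k : ℕ) (j : Fin k) : MonoidAlgebra ℂ (Equiv.Perm (Fin k)) :=
  ∑ m ∈ Finset.univ.filter (fun m : Fin k => m < j),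
    MonoidAlgebra.of ℂ (Equiv.Perm (Fin k)) (Equiv.swap m j)

/-- `σ` fixes every point with value `≥ j` and is transitive (in the cycle sense)
on points with value `< j`. -/
def Cyc (k j : ℕ) (σ : Equiv.Perm (Fin k)) : Prop :=
  (∀ x : Fin k, j ≤ (x : ℕ) → σ x = x) ∧
  (∀ x y : Fin k, (x : ℕ) < j → (y : ℕ) < j → σ.SameCycle x y)

lemma fix_lt {k j : ℕ} {σ : Equiv.Perm (Fin k)}
    (hfix : ∀ x : Fin k, j ≤ (x : ℕ) → σ x = x) {x : Fin k} (hx : (x : ℕ) < j) :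
    ((σ x : Fin k) : ℕ) < j := by
  by_contra h
  push_neg at h
  have h2 := hfix (σ x) h
  have h3 : σ x = x := σ.injective h2
  rw [h3] at h
  omega

lemma pow_lt {k j : ℕ} {σ : Equiv.Perm (Fin k)}
    (hfix : ∀ x : Fin k, j ≤ (x : ℕ) → σ x = x) {x : Fin k} (hx : (x : ℕ) < j) :
    ∀ n : ℕ, (((σ ^ n) x : Fin k) : ℕ) < j := by
  intro n
  induction n with
  | zero => simpa using hx
  | succ n ih =>
    rw [pow_succ', Equiv.Perm.mul_apply]
    exact fix_lt hfix ih

lemma cyc_step {k j : ℕ} (hj : j + 1 ≤ k) (σ : Equiv.Perm (Fin k)) (hσ : Cyc k j σ)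
    (m : Fin k) (hm : (m : ℕ) < j) :
    Cyc k (j + 1) (σ * Equiv.swap m ⟨j, by omega⟩) := by
  obtain ⟨hfix, htr⟩ := hσ
  set jf : Fin k := ⟨j, by omega⟩ with hjf
  set τ : Equiv.Perm (Fin k) := σ * Equiv.swap m jf with hτ
  have hσjf : σ jf = jf := hfix jf (le_refl j)
  have hmjf : m ≠ jf := by
    intro h; rw [h] at hm; simp [hjf] at hm
  have hτm : τ m = jf := by
    rw [hτ, Equiv.Perm.mul_apply, Equiv.swap_apply_left, hσjf]
  have hτjf : τ jf = σ m := by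
    rw [hτ, Equiv.Perm.mul_apply, Equiv.swap_apply_right]
  have hτother : ∀ x : Fin k, x ≠ m → x ≠ jf → τ x = σ x := by
    intro x h1 h2
    rw [hτ, Equiv.Perm.mul_apply, Equiv.swap_apply_of_ne_of_ne h1 h2]
  -- the key sub-lemma: every σ-power of m is in the τ-cycle of jf
  have subA : ∀ n : ℕ, τ.SameCycle jf ((σ ^ n) m) := by
    intro n
    induction n with
    | zero =>
      simp only [pow_zero, Equiv.Perm.one_apply]
      exact (Equiv.Perm.SameCycle.symm ⟨1, by simpa using hτm⟩)
    | succ n ih =>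
      have hlt : (((σ ^ n) m : Fin k) : ℕ) < j := pow_lt hfix hm n
      have hne2 : (σ ^ n) m ≠ jf := by
        intro h; rw [h] at hlt; simp [hjf] at hlt
      by_cases hc : (σ ^ n) m = m
      · have : (σ ^ (n + 1)) m = τ jf := by
          rw [pow_succ', Equiv.Perm.mul_apply, hc, hτjf]
        rw [this]
        exact ⟨1, by simp⟩
      · have hstep : τ ((σ ^ n) m) = (σ ^ (n + 1)) m := by
          rw [hτother _ hc hne2, pow_succ', Equiv.Perm.mul_apply]
        exact ih.trans ⟨1, by simpa using hstep⟩
  constructor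
  · intro x hx
    have h1 : x ≠ m := by intro h; rw [h] at hx; omega
    have h2 : x ≠ jf := by
      intro h; rw [h] at hx; simp [hjf] at hx
    rw [hτother x h1 h2]
    exact hfix x (by omega)
  · have key : ∀ z : Fin k, (z : ℕ) < j + 1 → τ.SameCycle jf z := by
      intro z hz
      rcases Nat.lt_succ_iff_lt_or_eq.mp hz with hz' | hz'
      · obtain ⟨n, _, hn⟩ := (htr m z hm hz').exists_pow_eq'
        rw [← hn]; exact subA n
      · have : z = jf := by apply Fin.ext; simpa [hjf] using hz'
        rw [this]
    intro x y hx hy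
    exact (key x hx).symm.trans (key y hy)

lemma cyc_unstep {k j : ℕ} (hj : j + 1 ≤ k) (h1 : 1 ≤ j) (τ : Equiv.Perm (Fin k))
    (hτ : Cyc k (j + 1) τ) :
    ((τ⁻¹ ⟨j, by omega⟩ : Fin k) : ℕ) < j ∧
      Cyc k j (τ * Equiv.swap (τ⁻¹ ⟨j, by omega⟩) ⟨j, by omega⟩) := by
  obtain ⟨hfix, htr⟩ := hτ
  set jf : Fin k := ⟨j, by omega⟩ with hjf
  set m : Fin k := τ⁻¹ jf with hm
  have hτm : τ m = jf := by rw [hm]; simp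
  -- τ does not fix jf
  have hτjf : τ jf ≠ jf := by
    intro h
    have h0 : ((⟨0, by omega⟩ : Fin k) : ℕ) < j + 1 := by simp
    have hsc := htr jf ⟨0, by omega⟩ (by simp [hjf]) h0
    obtain ⟨n, _, hn⟩ := hsc.exists_pow_eq'
    have hfixpow : ∀ i : ℕ, (τ ^ i) jf = jf := by
      intro i
      induction i with
      | zero => simp
      | succ i ih => rw [pow_succ', Equiv.Perm.mul_apply, ih, h]
    rw [hfixpow n] at hn
    have : j = 0 := by simpa [hjf, Fin.ext_iff] using hn
    omega
  have hjfv : (jf : ℕ) = j := rfl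
  have hmne : m ≠ jf := by
    intro h
    exact hτjf (by rw [← h, hτm]; exact h.symm)
  have hmlt : (m : ℕ) < j := by
    by_contra h
    push_neg at h
    rcases Nat.lt_or_ge (m : ℕ) (j + 1) with h' | h'
    · exact hmne (Fin.ext (by omega))
    · have := hfix m h'
      rw [hτm] at this
      rw [← this] at h'
      simp [hjf] at h'
  refine ⟨hmlt, ?_, ?_⟩
  · -- fixes points ≥ j
    intro x hx
    by_cases hxjf : x = jf
    · rw [hxjf, Equiv.Perm.mul_apply, Equiv.swap_apply_right, hτm]
    · have hxm : x ≠ m := by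
        intro h; rw [h] at hx; omega
      rw [Equiv.Perm.mul_apply, Equiv.swap_apply_of_ne_of_ne hxm hxjf]
      have : j + 1 ≤ (x : ℕ) := by
        rcases Nat.lt_or_ge (x : ℕ) (j + 1) with h' | h'
        · exact absurd (Fin.ext (by omega) : x = jf) hxjf
        · exact h'
      exact hfix x this
  · set σ : Equiv.Perm (Fin k) := τ * Equiv.swap m jf with hσ
    have hσm : σ m = τ jf := by
      rw [hσ, Equiv.Perm.mul_apply, Equiv.swap_apply_left]
    have hσother : ∀ x : Fin k, x ≠ m → x ≠ jf → σ x = τ x := by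
      intro x hx1 hx2
      rw [hσ, Equiv.Perm.mul_apply, Equiv.swap_apply_of_ne_of_ne hx1 hx2]
    have subB : ∀ n : ℕ, σ.SameCycle m ((τ ^ n) jf) ∨ (τ ^ n) jf = jf := by
      intro n
      induction n with
      | zero => right; simp
      | succ n ih =>
        have hsucc : (τ ^ (n + 1)) jf = τ ((τ ^ n) jf) := by
          rw [pow_succ', Equiv.Perm.mul_apply]
        rcases ih with ih | ih
        · by_cases hc1 : (τ ^ n) jf = jf
          · left; rw [hsucc, hc1, ← hσm]; exact ⟨1, by simp⟩
          · by_cases hc2 : (τ ^ n) jf = m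
            · right; rw [hsucc, hc2, hτm]
            · left
              have : σ ((τ ^ n) jf) = (τ ^ (n + 1)) jf := by
                rw [hσother _ hc2 hc1, hsucc]
              exact ih.trans ⟨1, by simpa using this⟩
        · left; rw [hsucc, ih, ← hσm]; exact ⟨1, by simp⟩
    have key : ∀ z : Fin k, (z : ℕ) < j → σ.SameCycle m z := by
      intro z hz
      have hsc := htr jf z (by simp [hjf]) (by omega)
      obtain ⟨n, _, hn⟩ := hsc.exists_pow_eq'
      rcases subB n with h | h
      · rwa [hn] at h
      · rw [hn] at h
        exfalso
        rw [h, hjfv] at hz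
        omega
    intro x y hx hy
    exact (key x hx).symm.trans (key y hy)

open scoped Classical in
lemma key_prod (k j : ℕ) (h1 : 1 ≤ j) (hjk : j ≤ k) :
    (List.ofFn (fun i : Fin (j - 1) => JM k ⟨(i : ℕ) + 1, by omega⟩)).prod =
      ∑ σ ∈ Finset.univ.filter (fun σ : Equiv.Perm (Fin k) => Cyc k j σ),
        MonoidAlgebra.of ℂ (Equiv.Perm (Fin k)) σ := by
  revert hjk
  induction j, h1 using Nat.le_induction with
  | base =>
    intro hk
    have hfilter : Finset.univ.filter (fun σ : Equiv.Perm (Fin k) => Cyc k 1 σ) = {1} := by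
      ext σ
      simp only [Finset.mem_filter, Finset.mem_univ, true_and, Finset.mem_singleton]
      constructor
      · rintro ⟨hfix, -⟩
        ext x
        by_cases hx : 1 ≤ (x : ℕ)
        · rw [hfix x hx]; rfl
        · have hx0 : (x : ℕ) = 0 := by omega
          by_contra hne
          have hy : 1 ≤ ((σ x : Fin k) : ℕ) := by
            by_contra h
            push_neg at h
            exact hne (by simp [Fin.ext_iff, hx0]; omega)
          have := hfix (σ x) hy
          have h3 : σ x = x := σ.injective this
          rw [h3] at hy
          omega
      · rintro rfl
        refine ⟨fun x _ => rfl, fun x y hx hy => ?_⟩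
        have : x = y := Fin.ext (by omega)
        rw [this]
    rw [hfilter]
    simp only [Finset.sum_singleton, map_one]
    have h0 : (1:ℕ) - 1 = 0 := rfl
    show (List.ofFn (fun x : Fin 0 => JM k ⟨(x : ℕ) + 1, by omega⟩)).prod = 1
    simp
  | succ j h1 ih =>
    intro hjk
    specialize ih (by omega)
    have hij : j ≤ k := by omega
    obtain ⟨i, rfl⟩ : ∃ i, j = i + 1 := ⟨j - 1, by omega⟩
    set jf : Fin k := ⟨i + 1, by omega⟩ with hjf
    have ih' : (List.ofFn (fun x : Fin i => JM k ⟨(x : ℕ) + 1, by omega⟩)).prod =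
        ∑ σ ∈ Finset.univ.filter (fun σ : Equiv.Perm (Fin k) => Cyc k (i + 1) σ),
          MonoidAlgebra.of ℂ (Equiv.Perm (Fin k)) σ := ih
    show (List.ofFn (fun x : Fin (i + 1) => JM k ⟨(x : ℕ) + 1, by omega⟩)).prod = _
    rw [List.ofFn_succ', List.concat_eq_append, List.prod_append, List.prod_singleton]
    have hlast : JM k ⟨((Fin.last i : Fin (i+1)) : ℕ) + 1, by omega⟩ = JM k jf := by
      congr 1
    rw [hlast]
    have hcast : (List.ofFn fun x : Fin i =>
        JM k ⟨((Fin.castSucc x : Fin (i+1)) : ℕ) + 1, by omega⟩).prod =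
        (List.ofFn (fun x : Fin i => JM k ⟨(x : ℕ) + 1, by omega⟩)).prod := rfl
    rw [hcast, ih']
    rw [JM]
    rw [Finset.sum_mul_sum]
    have hjfval : (jf : ℕ) = i + 1 := rfl
    -- rewrite each product of basis elements
    have hmul : ∀ σ m : _, (MonoidAlgebra.of ℂ (Equiv.Perm (Fin k)) σ) *
        (MonoidAlgebra.of ℂ (Equiv.Perm (Fin k)) (Equiv.swap m jf)) =
        MonoidAlgebra.of ℂ (Equiv.Perm (Fin k)) (σ * Equiv.swap m jf) := fun σ m =>
      (map_mul (MonoidAlgebra.of ℂ (Equiv.Perm (Fin k))) σ (Equiv.swap m jf)).symm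
    simp only [hmul]
    rw [← Finset.sum_product']
    refine Finset.sum_nbij'
      (fun p : Equiv.Perm (Fin k) × Fin k => p.1 * Equiv.swap p.2 jf)
      (fun τ => (τ * Equiv.swap (τ⁻¹ jf) jf, τ⁻¹ jf)) ?_ ?_ ?_ ?_ ?_
    · rintro ⟨σ, m⟩ hp
      simp only [Finset.mem_product, Finset.mem_filter, Finset.mem_univ, true_and] at hp
      obtain ⟨hσ, hm⟩ := hp
      simp only [Finset.mem_filter, Finset.mem_univ, true_and]
      have hmlt : (m : ℕ) < i + 1 := hm
      exact cyc_step (by omega) σ hσ m hmlt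
    · intro τ hτ
      simp only [Finset.mem_filter, Finset.mem_univ, true_and] at hτ
      obtain ⟨hlt, hcyc⟩ := cyc_unstep (by omega) (by omega) τ hτ
      simp only [Finset.mem_product, Finset.mem_filter, Finset.mem_univ, true_and]
      exact ⟨hcyc, hlt⟩
    · rintro ⟨σ, m⟩ hp
      simp only [Finset.mem_product, Finset.mem_filter, Finset.mem_univ, true_and] at hp
      obtain ⟨hσ, hm⟩ := hp
      have hσjf : σ jf = jf := hσ.1 jf (le_refl _)
      have hinv : (σ * Equiv.swap m jf)⁻¹ jf = m := by
        rw [mul_inv_rev, Equiv.Perm.mul_apply, Equiv.swap_inv]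
        have : σ⁻¹ jf = jf := by
          rw [← hσjf, Equiv.Perm.inv_def, Equiv.symm_apply_apply]
          exact hσjf.symm
        rw [this, Equiv.swap_apply_right]
      simp only [hinv]
      rw [mul_assoc, Equiv.swap_mul_self, mul_one]
    · intro τ hτ
      simp only
      rw [mul_assoc, Equiv.swap_mul_self, mul_one]
    · intro p hp
      rfl
  
open scoped Classical in
/-- In `ℂ[S_k]`, the (ordered) product `L₂ L₃ ⋯ L_k` of the Jucys–Murphy elements equals
the sum of all `k`-cycles of `S_k`, i.e. of all permutations of `Fin k` consisting of a
single cycle through all `k` points. -/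
theorem prod_jucys_murphy_eq_sum_cycles (k : ℕ) :
    (List.ofFn (fun j : Fin (k - 1) =>
        JM k ⟨(j : ℕ) + 1, by omega⟩)).prod =
      ∑ σ : Equiv.Perm (Fin k),
        if (∀ x y : Fin k, σ.SameCycle x y) then
          MonoidAlgebra.of ℂ (Equiv.Perm (Fin k)) σ
        else 0 := by
  rcases Nat.eq_zero_or_pos k with hk | hk
  · subst hk
    have h1 : ∀ σ : Equiv.Perm (Fin 0), σ = 1 := fun σ => Equiv.ext (fun x => x.elim0)
    rw [Finset.sum_eq_single 1 (fun σ _ hne => absurd (h1 σ) hne)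
      (fun h => absurd (Finset.mem_univ 1) h)]
    rw [if_pos (fun x => x.elim0)]
    show (List.ofFn (fun x : Fin 0 => JM 0 ⟨(x : ℕ) + 1, by omega⟩)).prod = _
    simp
    exact MonoidAlgebra.one_def
  · rw [key_prod k k hk (le_refl k)]
    rw [Finset.sum_filter]
    apply Finset.sum_congr rfl
    intro σ _
    have : Cyc k k σ ↔ (∀ x y : Fin k, σ.SameCycle x y) := by
      constructor
      · intro h x y
        exact h.2 x y x.isLt y.isLt
      · intro h
        exact ⟨fun x hx => absurd x.isLt (by omega), fun x y _ _ => h x y⟩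
    by_cases hc : Cyc k k σ
    · rw [if_pos hc, if_pos (this.mp hc)]
    · rw [if_neg hc, if_neg (fun h => hc (this.mpr h))]
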